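/- For fixed π ∈ (0,1), the function m ↦ 1/π - m(1-π)^m/(1-(1-π)^m) is increasing in m (over positive integers) and converges to 1/π as m → ∞. -/

import Mathlib

open Filter

lemma irsa_step (q : ℝ) (hq0 : 0 < q) (hq1 : q < 1) (m : ℕ) (hm : 1 ≤ m) :
    ((m : ℝ) + 1) * q ^ (m + 1) / (1 - q ^ (m + 1)) < (m : ℝ) * q ^ m / (1 - q ^ m) := by
  have hqm : q ^ m < 1 := pow_lt_one₀ hq0.le hq1 (by omega)
  have hqm1 : q ^ (m + 1) < 1 := pow_lt_one₀ hq0.le hq1 (by omega)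
  have hd1 : (0:ℝ) < 1 - q ^ m := by linarith
  have hd2 : (0:ℝ) < 1 - q ^ (m + 1) := by linarith
  rw [div_lt_div_iff₀ hd2 hd1]
  have hsum : (∑ i ∈ Finset.range m, q ^ i) * (1 - q) = 1 - q ^ m := by
    have := geom_sum_mul q m
    ring_nf
    ring_nf at this
    linarith
  have hkey : q * (∑ i ∈ Finset.range m, q ^ i) < m := by
    have : ∑ i ∈ Finset.range m, q * q ^ i < ∑ i ∈ Finset.range m, (1:ℝ) := by
      apply Finset.sum_lt_sum_of_nonempty
      · exact Finset.nonempty_range_iff.mpr (by omega)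
      · intro i _
        calc q * q ^ i = q ^ (i + 1) := by ring
          _ < 1 := pow_lt_one₀ hq0.le hq1 (by omega)
    simpa [Finset.mul_sum] using this
  have hkey2 : q * (1 - q ^ m) < m * (1 - q) := by
    have := mul_lt_mul_of_pos_right hkey (by linarith : (0:ℝ) < 1 - q)
    calc q * (1 - q ^ m) = q * ((∑ i ∈ Finset.range m, q ^ i) * (1 - q)) := by rw [hsum]
      _ = q * (∑ i ∈ Finset.range m, q ^ i) * (1 - q) := by ring
      _ < m * (1 - q) := this
  have hpm : (0:ℝ) < q ^ m := pow_pos hq0 m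
  have hgoal : ((m:ℝ) + 1) * q * (1 - q ^ m) - m * (1 - q * q ^ m)
      = q * (1 - q ^ m) - m * (1 - q) := by ring
  rw [pow_succ]
  nlinarith [mul_lt_mul_of_pos_left hkey2 hpm]

/-- For fixed `π ∈ (0,1)`, `m ↦ 1/π - m(1-π)^m/(1-(1-π)^m)` is increasing in
the positive integer `m` and converges to `1/π` as `m → ∞`. -/
theorem irsa_waiting_time_monotone_limit (π : ℝ) (hπ0 : 0 < π) (hπ1 : π < 1) :
    (∀ m₁ m₂ : ℕ, 1 ≤ m₁ → m₁ < m₂ →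
      1 / π - (m₁ : ℝ) * (1 - π) ^ m₁ / (1 - (1 - π) ^ m₁)
        < 1 / π - (m₂ : ℝ) * (1 - π) ^ m₂ / (1 - (1 - π) ^ m₂)) ∧
    Tendsto (fun m : ℕ =>
        1 / π - (m : ℝ) * (1 - π) ^ m / (1 - (1 - π) ^ m))
      atTop (nhds (1 / π)) := by
  set q := 1 - π with hq
  have hq0 : 0 < q := by simp [hq]; linarith
  have hq1 : q < 1 := by simp [hq]; linarith
  constructor
  · intro m₁ m₂ h1 hlt
    have key : ∀ m₂, m₁ < m₂ →
        (m₂ : ℝ) * q ^ m₂ / (1 - q ^ m₂) < (m₁ : ℝ) * q ^ m₁ / (1 - q ^ m₁) := by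
      intro n hn
      induction n with
      | zero => omega
      | succ k ih =>
        rcases Nat.lt_or_ge m₁ k with hk | hk
        · have := irsa_step q hq0 hq1 k (by omega)
          push_cast at this ⊢
          linarith [ih hk]
        · have hk' : m₁ = k := by omega
          subst hk'
          have := irsa_step q hq0 hq1 m₁ h1
          push_cast at this ⊢
          linarith
    linarith [key m₂ hlt]
  · have h1 : Tendsto (fun m : ℕ => (m : ℝ) * q ^ m) atTop (nhds 0) :=
      tendsto_self_mul_const_pow_of_lt_one hq0.le hq1
    have h2 : Tendsto (fun m : ℕ => 1 - q ^ m) atTop (nhds 1) := by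
      have := tendsto_pow_atTop_nhds_zero_of_lt_one hq0.le hq1
      simpa using (tendsto_const_nhds (x := (1:ℝ)).sub this)
    have h3 : Tendsto (fun m : ℕ => (m : ℝ) * q ^ m / (1 - q ^ m)) atTop (nhds 0) := by
      simpa [Pi.div_def] using h1.div h2 one_ne_zero
    simpa using (tendsto_const_nhds (x := 1 / π) (f := atTop)).sub h3
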